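/- arXiv:2006.06769 — 2 statements merged into one kernel-verified Lean document; each statement's English description precedes it below -/
import Mathlib

section
/- Let r̄₁ = s·r₁ and r̄₂ = s·r₂ where s ∈ [0, s̄] and r₁, r₂ are the first two rows of a rotation matrix R ∈ SO(3). Then ‖r̄₁‖² = ‖r̄₂‖² = s², r̄₁ᵀr̄₂ = 0, and 1 − (‖r̄₁‖² + ‖r̄₂‖²)/(2s̄²) ≥ 0. Conversely, if vectors r̄₁, r̄₂ ∈ ℝ³ satisfy ‖r̄₁‖² = ‖r̄₂‖², r̄₁ᵀr̄₂ = 0, and ‖r̄₁‖² + ‖r̄₂‖² ≤ 2s̄², then there exist s ∈ [0, s̄] and R ∈ SO(3) with r̄₁ = s·r₁ and r̄₂ = s·r₂ for the first two rows r₁, r₂ of R. -/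
open Matrix

lemma aux16 (a0 a1 a2 b0 b1 b2 : ℝ) (ha : a0^2+a1^2+a2^2 = 1)
    (hb : b0^2+b1^2+b2^2 = 1) (hab : a0*b0+a1*b1+a2*b2 = 0) :
    ∃ R : Matrix (Fin 3) (Fin 3) ℝ, Rᵀ * R = 1 ∧ R.det = 1 ∧
      R 0 0 = a0 ∧ R 0 1 = a1 ∧ R 0 2 = a2 ∧
      R 1 0 = b0 ∧ R 1 1 = b1 ∧ R 1 2 = b2 := by
  set R : Matrix (Fin 3) (Fin 3) ℝ :=
    !![a0,a1,a2;b0,b1,b2;a1*b2-a2*b1, a2*b0-a0*b2, a0*b1-a1*b0] with hR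
  have hT : Rᵀ = !![a0,b0,a1*b2-a2*b1; a1,b1,a2*b0-a0*b2; a2,b2,a0*b1-a1*b0] := by
    ext i j; fin_cases i <;> fin_cases j <;> rfl
  refine ⟨R, ?_, ?_, rfl, rfl, rfl, rfl, rfl, rfl⟩
  · rw [mul_eq_one_comm, hT, hR, Matrix.mul_fin_three, one_fin_three]
    ext i j
    fin_cases i <;> fin_cases j <;> simp [Matrix.vecHead, Matrix.vecTail] <;>
    first
      | linear_combination (b0^2+b1^2+b2^2)*ha + hb - (a0*b0+a1*b1+a2*b2)*hab
      | linear_combination ha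
      | linear_combination hb
      | linear_combination hab
      | linear_combination (-1 : ℝ) * hab
      | ring
  · rw [hR]
    simp [Matrix.det_fin_three]
    linear_combination (b0^2+b1^2+b2^2)*ha + hb - (a0*b0+a1*b1+a2*b2)*hab

theorem stmt_16 (sbar : ℝ) (hsbar : 0 < sbar) :
    (∀ s : ℝ, 0 ≤ s → s ≤ sbar →
      ∀ R : Matrix (Fin 3) (Fin 3) ℝ, Rᵀ * R = 1 → R.det = 1 →
        (∑ j, (s * R 0 j) ^ 2 = s ^ 2) ∧ (∑ j, (s * R 1 j) ^ 2 = s ^ 2) ∧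
        (∑ j, (s * R 0 j) * (s * R 1 j) = 0) ∧
        0 ≤ 1 - ((∑ j, (s * R 0 j) ^ 2) + ∑ j, (s * R 1 j) ^ 2) / (2 * sbar ^ 2)) ∧
    (∀ rb1 rb2 : Fin 3 → ℝ,
      (∑ j, (rb1 j) ^ 2 = ∑ j, (rb2 j) ^ 2) →
      (∑ j, rb1 j * rb2 j = 0) →
      ((∑ j, (rb1 j) ^ 2) + ∑ j, (rb2 j) ^ 2 ≤ 2 * sbar ^ 2) →
      ∃ (s : ℝ) (R : Matrix (Fin 3) (Fin 3) ℝ),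
        0 ≤ s ∧ s ≤ sbar ∧ Rᵀ * R = 1 ∧ R.det = 1 ∧
        (∀ j, rb1 j = s * R 0 j) ∧ (∀ j, rb2 j = s * R 1 j)) := by
  constructor
  · intro s hs0 hs1 R hRtR _
    have hR' : R * Rᵀ = 1 := mul_eq_one_comm.mp hRtR
    have h00 := congrFun (congrFun hR' 0) 0
    have h11 := congrFun (congrFun hR' 1) 1
    have h01 := congrFun (congrFun hR' 0) 1
    simp [Matrix.mul_apply, Matrix.one_apply, Fin.sum_univ_three] at h00 h11 h01
    have e0 : ∑ j, (s * R 0 j) ^ 2 = s ^ 2 := by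
      rw [Fin.sum_univ_three]; linear_combination s^2 * h00
    have e1 : ∑ j, (s * R 1 j) ^ 2 = s ^ 2 := by
      rw [Fin.sum_univ_three]; linear_combination s^2 * h11
    refine ⟨e0, e1, ?_, ?_⟩
    · rw [Fin.sum_univ_three]; linear_combination s^2 * h01
    · rw [e0, e1, sub_nonneg, div_le_one (by positivity)]
      nlinarith [pow_le_pow_left₀ hs0 hs1 2]
  · intro rb1 rb2 h1 h2 h3
    have hS0 : 0 ≤ ∑ j, (rb1 j) ^ 2 := Finset.sum_nonneg fun j _ => sq_nonneg _
    rcases eq_or_lt_of_le hS0 with hS | hS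
    · -- all zero case
      have hz1 : ∀ j, rb1 j = 0 := by
        intro j
        have := (Finset.sum_eq_zero_iff_of_nonneg (fun j _ => sq_nonneg (rb1 j))).mp
          hS.symm j (Finset.mem_univ j)
        exact pow_eq_zero_iff (n := 2) (by norm_num) |>.mp this
      have hz2 : ∀ j, rb2 j = 0 := by
        intro j
        have hS2 : ∑ j, (rb2 j) ^ 2 = 0 := by rw [← h1, ← hS]
        have := (Finset.sum_eq_zero_iff_of_nonneg (fun j _ => sq_nonneg (rb2 j))).mp
          hS2 j (Finset.mem_univ j)
        exact pow_eq_zero_iff (n := 2) (by norm_num) |>.mp this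
      refine ⟨0, 1, le_refl 0, hsbar.le, by simp, by simp, ?_, ?_⟩ <;>
        intro j <;> simp [hz1 j, hz2 j]
    · -- positive case
      set S := ∑ j, (rb1 j) ^ 2 with hSdef
      set s := Real.sqrt S with hsdef
      have hs_pos : 0 < s := Real.sqrt_pos.mpr hS
      have hssq : s ^ 2 = S := Real.sq_sqrt hS0
      have hs_le : s ≤ sbar := by
        have hSle : S ≤ sbar ^ 2 := by
          have : S + S ≤ 2 * sbar ^ 2 := by rw [hSdef]; nlinarith [h3, h1]
          linarith
        calc s = Real.sqrt S := rfl
          _ ≤ Real.sqrt (sbar ^ 2) := Real.sqrt_le_sqrt hSle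
          _ = sbar := Real.sqrt_sq hsbar.le
      have hSexp : rb1 0 ^ 2 + rb1 1 ^ 2 + rb1 2 ^ 2 = s ^ 2 := by
        rw [hssq, hSdef, Fin.sum_univ_three]
      have hS2exp : rb2 0 ^ 2 + rb2 1 ^ 2 + rb2 2 ^ 2 = s ^ 2 := by
        rw [hssq, h1, Fin.sum_univ_three (f := fun j => rb2 j ^ 2)]
      have h2exp : rb1 0 * rb2 0 + rb1 1 * rb2 1 + rb1 2 * rb2 2 = 0 := by
        rw [← Fin.sum_univ_three (fun j => rb1 j * rb2 j)]; exact h2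
      have hsne : s ≠ 0 := hs_pos.ne'
      obtain ⟨R, hRo, hRd, e00, e01, e02, e10, e11, e12⟩ :=
        aux16 (rb1 0 / s) (rb1 1 / s) (rb1 2 / s) (rb2 0 / s) (rb2 1 / s) (rb2 2 / s)
          (by field_simp; linear_combination hSexp)
          (by field_simp; linear_combination hS2exp)
          (by field_simp; linear_combination h2exp)
      refine ⟨s, R, hs_pos.le, hs_le, hRo, hRd, ?_, ?_⟩ <;> intro j <;> fin_cases j <;>
        simp [e00, e01, e02, e10, e11, e12] <;> field_simp
end

section
/- Let K ⊆ ℝᵐ be a nonempty closed convex cone and 𝒜 = {d : Ad = b} a nonempty affine subspace, and consider the Douglas–Rachford iteration d_{τ+1} = d_τ + γ_τ(proj_𝒜(2·proj_K(d_τ) − d_τ) − proj_K(d_τ)) with 0 < γ_τ < 2 fixed (γ_τ = γ). If K ∩ 𝒜 ≠ ∅, then the sequence (d_τ) converges, and proj_K of its limit lies in K ∩ 𝒜. -/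
open Matrix

section Aux

variable {F : Type*} [NormedAddCommGroup F] [InnerProductSpace ℝ F]

open RealInnerProductSpace

/-- Variational inequality for a metric projection onto a convex set. -/
lemma dr_var_ineq {C : Set F} (hC : Convex ℝ C) {x p : F} (hp : p ∈ C)
    (hmin : ∀ y ∈ C, dist x p ≤ dist x y) :
    ∀ w ∈ C, ⟪x - p, w - p⟫ ≤ 0 := by
  have hiInf : ‖x - p‖ = ⨅ w : C, ‖x - w‖ := by
    haveI : Nonempty C := ⟨⟨p, hp⟩⟩
    apply le_antisymm
    · exact le_ciInf fun w => by
        simpa [dist_eq_norm] using hmin w w.2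
    · exact ciInf_le ⟨0, fun _ ⟨w, hw⟩ => hw ▸ norm_nonneg _⟩ (⟨p, hp⟩ : C)
  exact (norm_eq_iInf_iff_real_inner_le_zero hC hp).mp hiInf

/-- Firm nonexpansiveness consequence of the variational inequality. -/
lemma dr_firm {C : Set F} (hC : Convex ℝ C) (P : F → F) (hP : ∀ x, P x ∈ C)
    (hmin : ∀ x, ∀ y ∈ C, dist x (P x) ≤ dist x y) (x y : F) :
    ⟪P x - P y, P x - P y⟫ ≤ ⟪x - y, P x - P y⟫ := by
  have h1 := dr_var_ineq hC (hP x) (hmin x) (P y) (hP y)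
  have h2 := dr_var_ineq hC (hP y) (hmin y) (P x) (hP x)
  have h1' : 0 ≤ ⟪x - P x, P x - P y⟫ := by
    have : P x - P y = -(P y - P x) := by abel
    rw [this, inner_neg_right]
    linarith
  have comb : ⟪(x - y) - (P x - P y), P x - P y⟫
      = ⟪x - P x, P x - P y⟫ - ⟪y - P y, P x - P y⟫ := by
    rw [← inner_sub_left]
    congr 1
    abel
  rw [inner_sub_left] at comb
  linarith

/-- The reflection `2 P - id` across a convex set is nonexpansive. -/
lemma dr_reflect_nonexp {C : Set F} (hC : Convex ℝ C) (P : F → F) (hP : ∀ x, P x ∈ C)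
    (hmin : ∀ x, ∀ y ∈ C, dist x (P x) ≤ dist x y) (x y : F) :
    ‖((2:ℝ) • P x - x) - ((2:ℝ) • P y - y)‖ ≤ ‖x - y‖ := by
  have hfirm := dr_firm hC P hP hmin x y
  have key : ‖((2:ℝ) • P x - x) - ((2:ℝ) • P y - y)‖ ^ 2 ≤ ‖x - y‖ ^ 2 := by
    have e : ((2:ℝ) • P x - x) - ((2:ℝ) • P y - y) = (2:ℝ) • (P x - P y) - (x - y) := by
      module
    rw [e, ← real_inner_self_eq_norm_sq, ← real_inner_self_eq_norm_sq]
    set a := P x - P y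
    set c := x - y
    have expand : ⟪(2:ℝ) • a - c, (2:ℝ) • a - c⟫
        = 4 * ⟪a, a⟫ - 4 * ⟪c, a⟫ + ⟪c, c⟫ := by
      simp only [inner_sub_left, inner_sub_right, real_inner_smul_left, real_inner_smul_right,
        real_inner_comm a c]
      ring
    rw [expand]
    linarith
  exact le_of_pow_le_pow_left₀ two_ne_zero (norm_nonneg _) key


/-- Norm identity for convex combinations in a real inner product space. -/
lemma dr_avg_identity (α : ℝ) (a c : F) :
    ‖(1 - α) • a + α • c‖ ^ 2
      = (1 - α) * ‖a‖ ^ 2 + α * ‖c‖ ^ 2 - α * (1 - α) * ‖a - c‖ ^ 2 := by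
  rw [← real_inner_self_eq_norm_sq, ← real_inner_self_eq_norm_sq,
    ← real_inner_self_eq_norm_sq, ← real_inner_self_eq_norm_sq]
  simp only [inner_add_left, inner_add_right, inner_sub_left, inner_sub_right,
    real_inner_smul_left, real_inner_smul_right, real_inner_comm a c]
  ring

end Aux

theorem stmt_17 {m k : ℕ} (K : Set (EuclideanSpace ℝ (Fin m)))
    (hKne : K.Nonempty) (hKclosed : IsClosed K) (hKconvex : Convex ℝ K)
    (hKcone : ∀ c : ℝ, 0 ≤ c → ∀ x ∈ K, c • x ∈ K)
    (Amat : Matrix (Fin k) (Fin m) ℝ) (b : Fin k → ℝ)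
    (hAne : {x : EuclideanSpace ℝ (Fin m) | Amat.mulVec x = b}.Nonempty)
    (projK projA : EuclideanSpace ℝ (Fin m) → EuclideanSpace ℝ (Fin m))
    (hprojK : ∀ x, projK x ∈ K ∧ ∀ y ∈ K, dist x (projK x) ≤ dist x y)
    (hprojA : ∀ x, Amat.mulVec (projA x) = b ∧
      ∀ y : EuclideanSpace ℝ (Fin m), Amat.mulVec y = b → dist x (projA x) ≤ dist x y)
    (γ : ℝ) (hγ0 : 0 < γ) (hγ2 : γ < 2)
    (d : ℕ → EuclideanSpace ℝ (Fin m))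
    (hiter : ∀ τ, d (τ + 1) = d τ + γ • (projA ((2 : ℝ) • projK (d τ) - d τ) - projK (d τ)))
    (hinter : (K ∩ {x : EuclideanSpace ℝ (Fin m) | Amat.mulVec x = b}).Nonempty) :
    ∃ L, Filter.Tendsto d Filter.atTop (nhds L) ∧
      projK L ∈ K ∩ {x : EuclideanSpace ℝ (Fin m) | Amat.mulVec x = b} := by
  classical
  set A : Set (EuclideanSpace ℝ (Fin m)) := {x : EuclideanSpace ℝ (Fin m) | Amat.mulVec x = b} with hA
  have hAconv : Convex ℝ A := by
    intro x hx y hy p q hp hq hpq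
    have hx' : Amat.mulVec x = b := hx
    have hy' : Amat.mulVec y = b := hy
    show Amat.mulVec (p • x + q • y) = b
    have : Amat.mulVec (p • x + q • y) = p • Amat.mulVec x + q • Amat.mulVec y := by
      rw [Matrix.mulVec_add, Matrix.mulVec_smul, Matrix.mulVec_smul]
    rw [this, hx', hy', ← add_smul, hpq, one_smul]
  have hPK : ∀ x, projK x ∈ K := fun x => (hprojK x).1
  have hPKmin : ∀ x, ∀ y ∈ K, dist x (projK x) ≤ dist x y := fun x => (hprojK x).2
  have hPA : ∀ x, projA x ∈ A := fun x => (hprojA x).1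
  have hPAmin : ∀ x, ∀ y ∈ A, dist x (projA x) ≤ dist x y := fun x y hy =>
    (hprojA x).2 y hy
  -- the reflected-reflection operator
  set N : EuclideanSpace ℝ (Fin m) → EuclideanSpace ℝ (Fin m) := fun x =>
    (2:ℝ) • projA ((2:ℝ) • projK x - x) - ((2:ℝ) • projK x - x) with hN
  have hNnonexp : ∀ x y, ‖N x - N y‖ ≤ ‖x - y‖ := by
    intro x y
    calc ‖N x - N y‖
        ≤ ‖((2:ℝ) • projK x - x) - ((2:ℝ) • projK y - y)‖ :=
          dr_reflect_nonexp hAconv projA hPA hPAmin _ _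
      _ ≤ ‖x - y‖ := dr_reflect_nonexp hKconvex projK hPK hPKmin x y
  set α : ℝ := γ / 2 with hα
  have hα0 : 0 < α := by positivity
  have hα1 : α < 1 := by rw [hα]; linarith
  have hT : ∀ τ, d (τ + 1) = (1 - α) • d τ + α • N (d τ) := by
    intro τ
    rw [hiter τ, hN, hα]
    module
  -- key Fejér-type inequality
  set c : ℝ := α * (1 - α) with hc
  have hc0 : 0 < c := by rw [hc]; nlinarith
  have hkey : ∀ w, N w = w → ∀ τ,
      ‖d (τ + 1) - w‖ ^ 2 + c * ‖N (d τ) - d τ‖ ^ 2 ≤ ‖d τ - w‖ ^ 2 := by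
    intro w hw τ
    have hcomb : d (τ + 1) - w = (1 - α) • (d τ - w) + α • (N (d τ) - w) := by
      rw [hT τ]; module
    have hid := dr_avg_identity α (d τ - w) (N (d τ) - w)
    have hdiff : (d τ - w) - (N (d τ) - w) = -(N (d τ) - d τ) := by abel
    have hb' : ‖N (d τ) - w‖ ≤ ‖d τ - w‖ := by
      calc ‖N (d τ) - w‖ = ‖N (d τ) - N w‖ := by rw [hw]
        _ ≤ ‖d τ - w‖ := hNnonexp _ _
    have hb2 : ‖N (d τ) - w‖ ^ 2 ≤ ‖d τ - w‖ ^ 2 := by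
      exact pow_le_pow_left₀ (norm_nonneg _) hb' 2
    rw [hcomb, hid, hdiff, norm_neg]
    nlinarith [sq_nonneg (‖N (d τ) - d τ‖)]
  -- a fixed point coming from the intersection
  obtain ⟨z, hzK, hzA⟩ := hinter
  have hPKz : projK z = z := by
    have h0 : dist z (projK z) ≤ 0 := by simpa using hPKmin z z hzK
    have := le_antisymm h0 dist_nonneg
    rw [dist_comm] at this
    exact (dist_eq_zero.mp this)
  have hPAz : projA z = z := by
    have h0 : dist z (projA z) ≤ 0 := by simpa using hPAmin z z hzA
    have := le_antisymm h0 dist_nonneg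
    rw [dist_comm] at this
    exact (dist_eq_zero.mp this)
  have hRz : (2:ℝ) • projK z - z = z := by rw [hPKz]; module
  have hNz : N z = z := by rw [hN]; simp only [hRz, hPAz]; module
  -- the sequence of squared distances to `z` is antitone
  set a : ℕ → ℝ := fun τ => ‖d τ - z‖ ^ 2 with ha
  have hamono : Antitone a := by
    apply antitone_nat_of_succ_le
    intro τ
    have h := hkey z hNz τ
    have h2 := mul_nonneg hc0.le (sq_nonneg (‖N (d τ) - d τ‖))
    simp only [ha]
    nlinarith
  have habdd : BddBelow (Set.range a) := ⟨0, by rintro _ ⟨τ, rfl⟩; positivity⟩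
  have haconv : Filter.Tendsto a Filter.atTop (nhds (⨅ τ, a τ)) :=
    tendsto_atTop_ciInf hamono habdd
  -- the displacement tends to zero
  have hdisp : Filter.Tendsto (fun τ => N (d τ) - d τ) Filter.atTop (nhds 0) := by
    have h1 : Filter.Tendsto (fun τ => a τ - a (τ + 1)) Filter.atTop (nhds 0) := by
      have := haconv.sub (haconv.comp (Filter.tendsto_add_atTop_nat 1))
      simpa using this
    have hsq : Filter.Tendsto (fun τ => ‖N (d τ) - d τ‖ ^ 2) Filter.atTop (nhds 0) := by
      have hub : Filter.Tendsto (fun τ => (a τ - a (τ + 1)) / c) Filter.atTop (nhds 0) := by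
        simpa using h1.div_const c
      apply squeeze_zero (fun τ => by positivity) (fun τ => ?_) hub
      simp only [ha]
      rw [le_div_iff₀ hc0, mul_comm]
      linarith [hkey z hNz τ]
    have hnorm : Filter.Tendsto (fun τ => ‖N (d τ) - d τ‖) Filter.atTop (nhds 0) := by
      have := hsq.sqrt
      simp only [Real.sqrt_sq (norm_nonneg _), Real.sqrt_zero] at this
      exact this
    exact tendsto_zero_iff_norm_tendsto_zero.mpr hnorm
  -- boundedness and a convergent subsequence
  have hball : ∀ τ, d τ ∈ Metric.closedBall z (‖d 0 - z‖) := by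
    intro τ
    have h1 : a τ ≤ a 0 := hamono (Nat.zero_le τ)
    have := le_of_pow_le_pow_left₀ two_ne_zero (norm_nonneg (d 0 - z)) h1
    simpa [Metric.mem_closedBall, dist_eq_norm] using this
  obtain ⟨L, _, φ, hφmono, hφtend⟩ :=
    (isCompact_closedBall z (‖d 0 - z‖)).tendsto_subseq hball
  have hφtop : Filter.Tendsto φ Filter.atTop Filter.atTop := hφmono.tendsto_atTop
  -- `L` is a fixed point of `N`
  have hNlip : LipschitzWith 1 N := LipschitzWith.of_dist_le_mul fun x y => by
    simpa [dist_eq_norm] using hNnonexp x y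
  have hNL : N L = L := by
    have h1 : Filter.Tendsto (fun j => N (d (φ j))) Filter.atTop (nhds (N L)) :=
      (hNlip.continuous.tendsto L).comp hφtend
    have h2 : Filter.Tendsto (fun j => N (d (φ j))) Filter.atTop (nhds L) := by
      have := hφtend.add (hdisp.comp hφtop)
      simp only [Function.comp] at this ⊢
      convert this using 2 with j
      · abel
      · rfl
      · rw [add_zero]
    exact tendsto_nhds_unique h1 h2
  -- Fejér monotonicity with respect to `L` gives convergence of the whole sequence
  have hbL : Antitone (fun τ => ‖d τ - L‖) := by
    apply antitone_nat_of_succ_le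
    intro τ
    have := hkey L hNL τ
    have h2 : ‖d (τ + 1) - L‖ ^ 2 ≤ ‖d τ - L‖ ^ 2 := by nlinarith [sq_nonneg ‖N (d τ) - d τ‖]
    exact le_of_pow_le_pow_left₀ two_ne_zero (norm_nonneg _) h2
  have hbbdd : BddBelow (Set.range fun τ => ‖d τ - L‖) :=
    ⟨0, by rintro _ ⟨τ, rfl⟩; positivity⟩
  have hbconv : Filter.Tendsto (fun τ => ‖d τ - L‖) Filter.atTop
      (nhds (⨅ τ, ‖d τ - L‖)) := tendsto_atTop_ciInf hbL hbbdd
  have hbsub : Filter.Tendsto (fun j => ‖d (φ j) - L‖) Filter.atTop (nhds 0) := by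
    have := (hφtend.sub (tendsto_const_nhds (x := L))).norm
    simpa using this
  have hinf0 : (⨅ τ, ‖d τ - L‖) = 0 :=
    tendsto_nhds_unique (hbconv.comp hφtop) hbsub
  have hdL : Filter.Tendsto d Filter.atTop (nhds L) := by
    rw [tendsto_iff_dist_tendsto_zero]
    simp only [dist_eq_norm]
    rw [← hinf0]
    exact hbconv
  refine ⟨L, hdL, hPK L, ?_⟩
  -- the fixed point property yields `projK L ∈ A`
  have hfix : (2:ℝ) • projA ((2:ℝ) • projK L - L) - ((2:ℝ) • projK L - L) = L := hNL
  have heq : (2:ℝ) • projA ((2:ℝ) • projK L - L) = (2:ℝ) • projK L := by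
    have h2 := sub_eq_iff_eq_add.mp hfix
    rw [h2]; module
  have heq2 : projA ((2:ℝ) • projK L - L) = projK L :=
    smul_right_injective (EuclideanSpace ℝ (Fin m)) (two_ne_zero) heq
  show Amat.mulVec (projK L) = b
  rw [← heq2]
  exact hPA _
end
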